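/- Let R be an h-local Prüfer domain and let A be a pure submodule of an R-module B which is a finite direct sum of ideals of R. Then A is a direct summand of B and A is isomorphic to a direct sum of ideals of R. -/

import Mathlib

set_option linter.unusedSectionVars false
set_option maxHeartbeats 1000000

open DirectSum Cardinal

universe u v w

variable (R : Type u) [CommRing R] [IsDomain R]


/-- A submodule `N` of `M` is *pure* if every finite system of `R`-linear equations with
constants in `N` that is solvable in `M` is solvable in `N`. -/
def IsPureSub {M : Type v} [AddCommGroup M] [Module R M] (N : Submodule R M) : Prop :=
  ∀ (n m : ℕ) (r : Fin n → Fin m → R) (a : Fin n → M),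
    (∀ i, a i ∈ N) →
    (∃ x : Fin m → M, ∀ i, ∑ j, r i j • x j = a i) →
    (∃ y : Fin m → M, (∀ j, y j ∈ N) ∧ ∀ i, ∑ j, r i j • y j = a i)

/-- A submodule `A ≤ B` is *balanced* if `B/A` is torsion-free and every rank-1
torsion-free module has the projective property w.r.t. `0 → A → B → B/A → 0`. -/
def IsBalanced {B : Type v} [AddCommGroup B] [Module R B] (A : Submodule R B) : Prop :=
  NoZeroSMulDivisors R (B ⧸ A) ∧
  ∀ (J : Type w) [AddCommGroup J] [Module R J], NoZeroSMulDivisors R J →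
    Module.rank R J = 1 →
    ∀ φ : J →ₗ[R] B ⧸ A, ∃ ψ : J →ₗ[R] B, A.mkQ ∘ₗ ψ = φ

/-- `M` is isomorphic to a direct sum of ideals of `R`. -/
def IsDirectSumOfIdeals (M : Type v) [AddCommGroup M] [Module R M] : Prop :=
  ∃ (ι : Type w) (I : ι → Ideal R), Nonempty (M ≃ₗ[R] ⨁ i, ↥(I i))

/-- `R` is an h-local domain. -/
def IsHLocal : Prop :=
  (∀ P : Ideal R, P.IsPrime → P ≠ ⊥ → ∃! m : Ideal R, m.IsMaximal ∧ P ≤ m) ∧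
  (∀ r : R, r ≠ 0 → {m : Ideal R | m.IsMaximal ∧ r ∈ m}.Finite)

/-- `R` is a Prüfer domain: finitely generated ideals are projective. -/
def IsPruefer : Prop := ∀ I : Ideal R, I.FG → Module.Projective R ↥I

/-- A `G(ℵ₀)`-family of submodules of `M`. -/
def IsGAleph0Family {M : Type v} [AddCommGroup M] [Module R M]
    (𝓑 : Set (Submodule R M)) : Prop :=
  ⊥ ∈ 𝓑 ∧ ⊤ ∈ 𝓑 ∧
  (∀ c ⊆ 𝓑, c.Nonempty → IsChain (· ≤ ·) c → sSup c ∈ 𝓑) ∧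
  (∀ A₀ ∈ 𝓑, ∀ H : Set M, H.Countable →
    ∃ A ∈ 𝓑, A₀ ≤ A ∧ H ⊆ (A : Set M) ∧
      ∃ S : Set M, S.Countable ∧ S ⊆ (A : Set M) ∧ A ≤ A₀ ⊔ Submodule.span R S)


section Sat

variable {R} {M : Type v} [AddCommGroup M] [Module R M]

/-- The saturation of the cyclic submodule generated by `a`. -/
def sat (a : M) : Submodule R M where
  carrier := {b | ∃ r s : R, r ≠ 0 ∧ r • b = s • a}
  add_mem' := by
    rintro b c ⟨r, s, hr, hb⟩ ⟨r', s', hr', hc⟩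
    refine ⟨r * r', r' * s + r * s', mul_ne_zero hr hr', ?_⟩
    have h1 : (r * r') • b = r' • (s • a) := by rw [mul_comm, mul_smul, hb]
    have h2 : (r * r') • c = r • (s' • a) := by rw [mul_smul, hc]
    rw [smul_add, h1, h2, add_smul, mul_smul, mul_smul]
  zero_mem' := ⟨1, 0, one_ne_zero, by simp⟩
  smul_mem' := by
    rintro c b ⟨r, s, hr, hb⟩
    exact ⟨r, c * s, hr, by rw [smul_comm, hb, mul_smul]⟩

lemma mem_sat {a b : M} : b ∈ (sat a : Submodule R M) ↔ ∃ r s : R, r ≠ 0 ∧ r • b = s • a :=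
  Iff.rfl

lemma self_mem_sat (a : M) : a ∈ (sat a : Submodule R M) := ⟨1, 1, one_ne_zero, rfl⟩

/-- A saturated submodule. -/
def SatSub (A : Submodule R M) : Prop :=
  ∀ (r : R) (b : M), r ≠ 0 → r • b ∈ A → b ∈ A

lemma sat_le_of_mem {A : Submodule R M} (hA : SatSub A) {a : M} (ha : a ∈ A) :
    sat a ≤ A := by
  rintro b ⟨r, s, hr, hb⟩
  exact hA r b hr (hb ▸ A.smul_mem s ha)

lemma satsub_sat [NoZeroSMulDivisors R M] (a : M) : SatSub (sat a : Submodule R M) := by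
  rintro r b hr ⟨r', s, hr', hb⟩
  refine ⟨r' * r, s, mul_ne_zero hr' hr, ?_⟩
  rw [mul_smul]; exact hb

omit [IsDomain R] in
lemma satsub_inf {A B : Submodule R M} (hA : SatSub A) (hB : SatSub B) : SatSub (A ⊓ B) :=
  fun r b hr hb => ⟨hA r b hr hb.1, hB r b hr hb.2⟩

/-- membership in sat transfers through injective linear maps -/
lemma mem_sat_map {N : Type v} [AddCommGroup N] [Module R N] (f : M →ₗ[R] N)
    (hf : Function.Injective f) (a b : M) :
    f b ∈ (sat (f a) : Submodule R N) ↔ b ∈ (sat a : Submodule R M) := by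
  constructor
  · rintro ⟨r, s, hr, h⟩
    refine ⟨r, s, hr, hf ?_⟩
    rw [map_smul, map_smul]; exact h
  · rintro ⟨r, s, hr, h⟩
    exact ⟨r, s, hr, by rw [← map_smul, ← map_smul, h]⟩

lemma sat_map {N : Type v} [AddCommGroup N] [Module R N] (e : M ≃ₗ[R] N) (a : M) :
    (sat a : Submodule R M).map (e : M →ₗ[R] N) = sat (e a) := by
  ext n
  constructor
  · rintro ⟨b, hb, rfl⟩
    exact ((mem_sat_map (e : M →ₗ[R] N) e.injective a b).2 hb)
  · intro hn
    refine ⟨e.symm n, ?_, by simp⟩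
    have := (mem_sat_map (e : M →ₗ[R] N) e.injective a (e.symm n))
    exact this.1 (by simpa using hn)

end Sat

section Crux

variable {R}

lemma one_not_mem {m : Ideal R} (hm : m ≠ ⊤) : (1 : R) ∉ m :=
  fun h => hm ((Ideal.eq_top_iff_one m).2 h)

/-- Divisibility dichotomy in a Prüfer domain, relative to an ideal `m`. -/
lemma div_dichotomy (hP : IsPruefer R) (a b : R) (m : Ideal R) (hm : m ≠ ⊤) :
    (∃ s, s ∉ m ∧ ∃ r, s * b = r * a) ∨ (∃ s, s ∉ m ∧ ∃ r, s * a = r * b) := by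
  classical
  set I := Ideal.span {a, b} with hIdef
  have hfg : I.FG := ⟨{a, b}, by simp [hIdef]⟩
  have hproj := hP I hfg
  let f : (R × R) →ₗ[R] ↥I :=
    { toFun := fun x => ⟨x.1 * a + x.2 * b, Ideal.mem_span_pair.2 ⟨x.1, x.2, rfl⟩⟩
      map_add' := by intro x y; ext; simp; ring
      map_smul' := by intro c x; ext; simp; ring }
  have hsurj : Function.Surjective f := by
    rintro ⟨z, hz⟩
    obtain ⟨uu, vv, huv⟩ := Ideal.mem_span_pair.1 hz
    exact ⟨(uu, vv), by ext; simpa [f] using huv⟩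
  obtain ⟨h, hh⟩ := Module.projective_lifting_property (h := hproj) f LinearMap.id hsurj
  have ha : a ∈ I := Ideal.subset_span (by simp)
  have hb : b ∈ I := Ideal.subset_span (by simp)
  set α : ↥I := ⟨a, ha⟩ with hα
  set β : ↥I := ⟨b, hb⟩ with hβ
  have key : a • h β = b • h α := by
    rw [← map_smul, ← map_smul]
    congr 1
    ext
    simp [hα, hβ]
    ring
  have hfα : (h α).1 * a + (h α).2 * b = a := by
    have h1 : f (h α) = α := by
      have := LinearMap.ext_iff.1 hh α
      simpa using this
    have := congrArg (Subtype.val) h1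
    simpa [f] using this
  by_cases hc : (h α).1 ∈ m
  · right
    refine ⟨1 - (h α).1, fun hmem => ?_, (h α).2, ?_⟩
    · exact one_not_mem hm (by simpa using add_mem hmem hc)
    · linear_combination -hfα
  · left
    refine ⟨(h α).1, hc, (h β).1, ?_⟩
    have := congrArg Prod.fst key
    simp only [Prod.smul_fst, smul_eq_mul] at this
    rw [mul_comm ((h α).1) b, mul_comm ((h β).1) a]
    exact this.symm

/-- `x` is "locally in Y at m": there is `s ∉ m` with `s*x ∈ Y`. -/
def locle (X Y m : Ideal R) : Prop := ∀ x ∈ X, ∃ s, s ∉ m ∧ s * x ∈ Y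

lemma locle_total (hP : IsPruefer R) (I J m : Ideal R) (hm : m ≠ ⊤) :
    locle J I m ∨ locle I J m := by
  classical
  by_cases hJI : locle J I m
  · exact Or.inl hJI
  · right
    rw [locle] at hJI
    push_neg at hJI
    obtain ⟨b, hbJ, hbbad⟩ := hJI
    intro x hx
    rcases div_dichotomy hP x b m hm with ⟨s, hs, r, hsr⟩ | ⟨s, hs, r, hsr⟩
    · exact absurd (hsr ▸ I.mul_mem_left r hx) (hbbad s hs)
    · exact ⟨s, hs, hsr ▸ J.mul_mem_left r hbJ⟩

/-- The contraction of `c R_m` to `R`, as an ideal (for `m` prime). -/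
def locIdeal (c : R) (m : Ideal R) (hm : m.IsPrime) : Ideal R where
  carrier := {x | ∃ s, s ∉ m ∧ s * x ∈ Ideal.span {c}}
  zero_mem' := ⟨1, one_not_mem hm.1, by simp⟩
  add_mem' := by
    rintro x y ⟨s, hs, hx⟩ ⟨s', hs', hy⟩
    refine ⟨s * s', fun hmem => (hm.mem_or_mem hmem).elim hs hs', ?_⟩
    have : s * s' * (x + y) = s' * (s * x) + s * (s' * y) := by ring
    rw [this]
    exact add_mem (Ideal.mul_mem_left _ _ hx) (Ideal.mul_mem_left _ _ hy)
  smul_mem' := by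
    rintro c' x ⟨s, hs, hx⟩
    refine ⟨s, hs, ?_⟩
    have : s * (c' • x) = c' * (s * x) := by simp [smul_eq_mul]; ring
    rw [this]
    exact Ideal.mul_mem_left _ _ hx

lemma mem_locIdeal {c : R} {m : Ideal R} (hm : m.IsPrime) {x : R} :
    x ∈ locIdeal c m hm ↔ ∃ s, s ∉ m ∧ s * x ∈ Ideal.span {c} := Iff.rfl

lemma c_mem_locIdeal {c : R} {m : Ideal R} (hm : m.IsPrime) : c ∈ locIdeal c m hm :=
  ⟨1, one_not_mem hm.1, by simpa using Ideal.mem_span_singleton_self c⟩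

lemma locIdeal_radical_prime (hP : IsPruefer R) {c : R} {m : Ideal R} (hm : m.IsPrime)
    (hmtop : m ≠ ⊤) (hcm : c ∈ m) : (locIdeal c m hm).radical.IsPrime := by
  constructor
  · intro htop
    have h1 : (1 : R) ∈ (locIdeal c m hm).radical := htop ▸ Submodule.mem_top
    obtain ⟨n, hn⟩ := Ideal.mem_radical_iff.1 h1
    rw [one_pow] at hn
    obtain ⟨s, hs, hsc⟩ := hn
    rw [mul_one] at hsc
    obtain ⟨r, hr⟩ := Ideal.mem_span_singleton'.1 hsc
    exact hs (hr ▸ m.mul_mem_left r hcm)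
  · intro x y hxy
    obtain ⟨n, hn⟩ := Ideal.mem_radical_iff.1 hxy
    obtain ⟨s, hs, hsc⟩ := hn
    rcases div_dichotomy hP x y m hmtop with ⟨s₀, hs₀, r, hsr⟩ | ⟨s₀, hs₀, r, hsr⟩
    · -- s₀ * y = r * x  : conclude y ∈ radical
      right
      refine Ideal.mem_radical_iff.2 ⟨2 * n, ⟨s * s₀ ^ n, fun hmem => ?_, ?_⟩⟩
      · rcases hm.mem_or_mem hmem with h | h
        · exact hs h
        · exact hs₀ (hm.mem_of_pow_mem _ h)
      · have : s * s₀ ^ n * y ^ (2 * n) = r ^ n * (s * (x * y) ^ n) := by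
          have hyy : (s₀ * y) ^ n = (r * x) ^ n := by rw [hsr]
          have h2 : y ^ (2 * n) = y ^ n * y ^ n := by rw [two_mul, pow_add]
          calc s * s₀ ^ n * y ^ (2 * n) = s * ((s₀ * y) ^ n) * y ^ n := by
                rw [h2, mul_pow]; ring
            _ = s * ((r * x) ^ n) * y ^ n := by rw [hyy]
            _ = r ^ n * (s * (x * y) ^ n) := by rw [mul_pow, mul_pow]; ring
        rw [this]
        exact Ideal.mul_mem_left _ _ hsc
    · -- s₀ * x = r * y : conclude x ∈ radical
      left
      refine Ideal.mem_radical_iff.2 ⟨2 * n, ⟨s * s₀ ^ n, fun hmem => ?_, ?_⟩⟩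
      · rcases hm.mem_or_mem hmem with h | h
        · exact hs h
        · exact hs₀ (hm.mem_of_pow_mem _ h)
      · have : s * s₀ ^ n * x ^ (2 * n) = r ^ n * (s * (x * y) ^ n) := by
          have hyy : (s₀ * x) ^ n = (r * y) ^ n := by rw [hsr]
          have h2 : x ^ (2 * n) = x ^ n * x ^ n := by rw [two_mul, pow_add]
          calc s * s₀ ^ n * x ^ (2 * n) = s * ((s₀ * x) ^ n) * x ^ n := by
                rw [h2, mul_pow]; ring
            _ = s * ((r * y) ^ n) * x ^ n := by rw [hyy]
            _ = r ^ n * (s * (x * y) ^ n) := by rw [mul_pow, mul_pow]; ring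
        rw [this]
        exact Ideal.mul_mem_left _ _ hsc

lemma locIdeal_radical_le (c : R) {m : Ideal R} (hm : m.IsPrime) (hcm : c ∈ m) :
    (locIdeal c m hm).radical ≤ m := by
  intro x hx
  obtain ⟨n, s, hs, hsc⟩ := Ideal.mem_radical_iff.1 hx
  obtain ⟨r, hr⟩ := Ideal.mem_span_singleton'.1 hsc
  have hxn : x ^ n ∈ m := by
    have : s * x ^ n ∈ m := hr ▸ m.mul_mem_left r hcm
    rcases hm.mem_or_mem this with h | h
    · exact absurd h hs
    · exact h
  exact hm.mem_of_pow_mem _ hxn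

lemma locIdeal_radical_ne_bot {c : R} (hc : c ≠ 0) {m : Ideal R} (hm : m.IsPrime) :
    (locIdeal c m hm).radical ≠ ⊥ := by
  intro hbot
  have : c ∈ (locIdeal c m hm).radical := Ideal.le_radical (c_mem_locIdeal hm)
  rw [hbot] at this
  exact hc (by simpa using this)


open Classical in
noncomputable def locIdealM (c : R) (m : Ideal R) : Ideal R :=
  if hm : m.IsPrime then locIdeal c m hm else ⊤

lemma locIdealM_eq {c : R} {m : Ideal R} (hm : m.IsPrime) :
    locIdealM c m = locIdeal c m hm := by unfold locIdealM; exact dif_pos hm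

lemma finset_inf_le_prime {ι : Type*} (F : Finset ι) (f : ι → Ideal R) (P : Ideal R)
    (hP : P.IsPrime) (h : F.inf f ≤ P) : ∃ m ∈ F, f m ≤ P := by
  classical
  induction F using Finset.induction_on with
  | empty =>
    simp only [Finset.inf_empty] at h
    exact absurd (top_le_iff.1 h) hP.1
  | @insert a F ha ih =>
    rw [Finset.inf_insert] at h
    rcases (Ideal.IsPrime.inf_le hP).1 h with h' | h'
    · exact ⟨_, Finset.mem_insert_self _ _, h'⟩
    · obtain ⟨m, hm, hle⟩ := ih h'
      exact ⟨m, Finset.mem_insert_of_mem hm, hle⟩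

lemma mem_of_forall_maximal (I : Ideal R) (z : R)
    (h : ∀ m : Ideal R, m.IsMaximal → ∃ s, s ∉ m ∧ s * z ∈ I) : z ∈ I := by
  by_contra hz
  set E := I.colon {z} with hE
  have hEtop : E ≠ ⊤ := by
    intro htop
    have h1 : (1 : R) ∈ E := (Ideal.eq_top_iff_one E).1 htop
    have := Submodule.mem_colon_singleton.1 h1
    rw [one_smul] at this
    exact hz this
  obtain ⟨m, hm, hEm⟩ := Ideal.exists_le_maximal E hEtop
  obtain ⟨s, hs, hsz⟩ := h m hm
  exact hs (hEm (Submodule.mem_colon_singleton.2 (by rw [smul_eq_mul]; exact hsz)))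

/-- THE CRUX: over an h-local Prüfer domain, for nonzero ideals I, J there are
`s + t = 1` with `s(I+J) ⊆ I` and `t(I+J) ⊆ J`. -/
lemma crux (hH : IsHLocal R) (hP : IsPruefer R) (I J : Ideal R) (hI : I ≠ ⊥) (hJ : J ≠ ⊥) :
    ∃ s t : R, s + t = 1 ∧ (∀ x ∈ I ⊔ J, s * x ∈ I) ∧ (∀ x ∈ I ⊔ J, t * x ∈ J) := by
  classical
  obtain ⟨i0, hi0I, hi0⟩ := Submodule.exists_mem_ne_zero_of_ne_bot hI
  obtain ⟨j0, hj0J, hj0⟩ := Submodule.exists_mem_ne_zero_of_ne_bot hJ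
  set c := i0 * j0 with hcdef
  have hc0 : c ≠ 0 := mul_ne_zero hi0 hj0
  have hcI : c ∈ I := I.mul_mem_right j0 hi0I
  have hcJ : c ∈ J := J.mul_mem_left i0 hj0J
  have hfin := hH.2 c hc0
  set badF := hfin.toFinset with hbadF
  have hbad : ∀ m ∈ badF, m.IsMaximal ∧ c ∈ m := fun m hm => (hfin.mem_toFinset).1 hm
  have hbad' : ∀ m : Ideal R, m.IsMaximal → c ∈ m → m ∈ badF := fun m h1 h2 =>
    (hfin.mem_toFinset).2 ⟨h1, h2⟩
  set SF := badF.filter (fun m => locle J I m) with hSF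
  set TF := badF.filter (fun m => ¬ locle J I m) with hTF
  set DS := SF.inf (locIdealM c) with hDS
  set DT := TF.inf (locIdealM c) with hDT
  have hcmemloc : ∀ m ∈ badF, c ∈ locIdealM c m := by
    intro m hm
    rw [locIdealM_eq ((hbad m hm).1.isPrime)]
    exact c_mem_locIdeal _
  have hcDS : c ∈ DS := Submodule.mem_finsetInf.2 fun m hm =>
    hcmemloc m (Finset.mem_filter.1 hm).1
  have hcDT : c ∈ DT := Submodule.mem_finsetInf.2 fun m hm =>
    hcmemloc m (Finset.mem_filter.1 hm).1
  -- the key comaximality, using h-locality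
  have hDST : DS ⊔ DT = ⊤ := by
    by_contra hne
    obtain ⟨m0, hm0, hle⟩ := Ideal.exists_le_maximal _ hne
    have hcm0 : c ∈ m0 := hle (Submodule.mem_sup_left hcDS)
    have hm0bad : m0 ∈ badF := hbad' m0 hm0 hcm0
    have key : ∀ (G : Finset (Ideal R)), G ⊆ badF → m0 ∉ G → ¬ (G.inf (locIdealM c) ≤ m0) := by
      intro G hG hm0G hGle
      obtain ⟨m', hm'G, hm'le⟩ := finset_inf_le_prime G (locIdealM c) m0 hm0.isPrime hGle
      have hm'bad := hbad m' (hG hm'G)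
      have hm'prime := hm'bad.1.isPrime
      rw [locIdealM_eq hm'prime] at hm'le
      have hradle : (locIdeal c m' hm'prime).radical ≤ m0 := by
        have := Ideal.radical_mono hm'le
        rwa [hm0.isPrime.radical] at this
      have hradprime := locIdeal_radical_prime hP hm'prime hm'bad.1.ne_top hm'bad.2
      have hradne := locIdeal_radical_ne_bot hc0 hm'prime
      obtain ⟨mu, _, huniq⟩ := hH.1 _ hradprime hradne
      have e1 : m' = mu := huniq m' ⟨hm'bad.1, locIdeal_radical_le c hm'prime hm'bad.2⟩
      have e2 : m0 = mu := huniq m0 ⟨hm0, hradle⟩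
      exact hm0G (e2 ▸ e1 ▸ hm'G)
    by_cases hS : locle J I m0
    · exact key TF (Finset.filter_subset _ _) (fun hmem => (Finset.mem_filter.1 hmem).2 hS)
        (le_trans le_sup_right hle)
    · exact key SF (Finset.filter_subset _ _) (fun hmem => hS (Finset.mem_filter.1 hmem).2)
        (le_trans le_sup_left hle)
  have h1mem : (1 : R) ∈ DS ⊔ DT := (Ideal.eq_top_iff_one _).1 hDST
  obtain ⟨t, htDS, s, hsDT, hts⟩ := Submodule.mem_sup.1 h1mem
  refine ⟨s, t, by rw [add_comm]; exact hts, ?_, ?_⟩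
  · -- s * x ∈ I for x ∈ I ⊔ J
    intro x hx
    obtain ⟨xI, hxI, xJ, hxJ, rfl⟩ := Submodule.mem_sup.1 hx
    have h2 : s * xJ ∈ I := by
      apply mem_of_forall_maximal
      intro m hm
      by_cases hcm : c ∈ m
      · have hmbad : m ∈ badF := hbad' m hm hcm
        by_cases hSm : locle J I m
        · obtain ⟨u, hu, hux⟩ := hSm xJ hxJ
          refine ⟨u, hu, ?_⟩
          have : u * (s * xJ) = s * (u * xJ) := by ring
          rw [this]; exact I.mul_mem_left _ hux
        · have hmTF : m ∈ TF := Finset.mem_filter.2 ⟨hmbad, hSm⟩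
          have hsloc : s ∈ locIdealM c m := (Finset.inf_le (f := locIdealM c) hmTF) hsDT
          rw [locIdealM_eq hm.isPrime] at hsloc
          obtain ⟨v, hv, hvs⟩ := (mem_locIdeal hm.isPrime).1 hsloc
          obtain ⟨rc, hrc⟩ := Ideal.mem_span_singleton'.1 hvs
          refine ⟨v, hv, ?_⟩
          have : v * (s * xJ) = (rc * xJ) * c := by rw [← mul_assoc, ← hrc]; ring
          rw [this]; exact I.mul_mem_left _ hcI
      · refine ⟨c, hcm, ?_⟩
        have : c * (s * xJ) = (s * xJ) * c := by ring
        rw [this]; exact I.mul_mem_left _ hcI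
    have : s * (xI + xJ) = s * xI + s * xJ := by ring
    rw [this]
    exact add_mem (I.mul_mem_left s hxI) h2
  · -- t * x ∈ J for x ∈ I ⊔ J
    intro x hx
    obtain ⟨xI, hxI, xJ, hxJ, rfl⟩ := Submodule.mem_sup.1 hx
    have h2 : t * xI ∈ J := by
      apply mem_of_forall_maximal
      intro m hm
      by_cases hcm : c ∈ m
      · have hmbad : m ∈ badF := hbad' m hm hcm
        by_cases hSm : locle J I m
        · have hmSF : m ∈ SF := Finset.mem_filter.2 ⟨hmbad, hSm⟩
          have htloc : t ∈ locIdealM c m := (Finset.inf_le (f := locIdealM c) hmSF) htDS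
          rw [locIdealM_eq hm.isPrime] at htloc
          obtain ⟨v, hv, hvt⟩ := (mem_locIdeal hm.isPrime).1 htloc
          obtain ⟨rc, hrc⟩ := Ideal.mem_span_singleton'.1 hvt
          refine ⟨v, hv, ?_⟩
          have : v * (t * xI) = (rc * xI) * c := by rw [← mul_assoc, ← hrc]; ring
          rw [this]; exact J.mul_mem_left _ hcJ
        · have hIJ : locle I J m := (locle_total hP I J m hm.ne_top).resolve_left hSm
          obtain ⟨u, hu, hux⟩ := hIJ xI hxI
          refine ⟨u, hu, ?_⟩
          have : u * (t * xI) = t * (u * xI) := by ring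
          rw [this]; exact J.mul_mem_left _ hux
      · refine ⟨c, hcm, ?_⟩
        have : c * (t * xI) = (t * xI) * c := by ring
        rw [this]; exact J.mul_mem_left _ hcJ
    have : t * (xI + xJ) = t * xI + t * xJ := by ring
    rw [this]
    exact add_mem h2 (J.mul_mem_left t hxJ)

end Crux
section Merge

variable {R}

/-- The linear functional `(x, y) ↦ q x - p y` on `↥K × ↥L`. -/
def lineMap (K L : Ideal R) (p q : R) : (↥K × ↥L) →ₗ[R] R where
  toFun := fun z => q * (z.1 : R) - p * (z.2 : R)
  map_add' := by
    intro z w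
    simp only [Prod.fst_add, Prod.snd_add, Submodule.coe_add]
    ring
  map_smul' := by
    intro c z
    simp only [Prod.smul_fst, Prod.smul_snd, SetLike.val_smul, smul_eq_mul, RingHom.id_apply]
    ring

lemma lineMap_apply (K L : Ideal R) (p q : R) (z : ↥K × ↥L) :
    lineMap K L p q z = q * (z.1 : R) - p * (z.2 : R) := rfl

/-- the second-coordinate functional on a submodule of `↥K × ↥L` -/
def sndCoord (K L : Ideal R) (S : Submodule R (↥K × ↥L)) : ↥S →ₗ[R] R where
  toFun := fun z => ((z : ↥K × ↥L).2 : R)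
  map_add' := by intro z w; push_cast; rfl
  map_smul' := by intro c z; push_cast; simp [smul_eq_mul]

def fstCoord (K L : Ideal R) (S : Submodule R (↥K × ↥L)) : ↥S →ₗ[R] R where
  toFun := fun z => ((z : ↥K × ↥L).1 : R)
  map_add' := by intro z w; push_cast; rfl
  map_smul' := by intro c z; push_cast; simp [smul_eq_mul]

/-- MERGE: the "line" through `(pa, qa)` in `K ⊕ L` is a direct summand, with both
the line and its complement isomorphic to ideals. -/
lemma merge (hH : IsHLocal R) (hP : IsPruefer R) (K L : Ideal R) (pa : ↥K) (qa : ↥L)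
    (hqa : (qa : R) ≠ 0) :
    ∃ (S T : Submodule R (↥K × ↥L)) (JS JT : Ideal R),
      IsCompl S T ∧ (pa, qa) ∈ S ∧
      (sat ((pa, qa) : ↥K × ↥L) ≤ S) ∧
      Nonempty (↥S ≃ₗ[R] ↥JS) ∧ Nonempty (↥T ≃ₗ[R] ↥JT) := by
  classical
  set p : R := (pa : R) with hpdef
  set q : R := (qa : R) with hqdef
  set f := lineMap K L p q with hf
  set S := LinearMap.ker f with hSdef
  have hmemS : ∀ z : ↥K × ↥L, z ∈ S ↔ q * (z.1 : R) = p * (z.2 : R) := by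
    intro z
    rw [hSdef, LinearMap.mem_ker, hf, lineMap_apply, sub_eq_zero]
  have hpaqaS : (pa, qa) ∈ S := by rw [hmemS]; ring
  have hsatS : sat ((pa, qa) : ↥K × ↥L) ≤ S := by
    rintro z ⟨r, s, hr, hz⟩
    rw [hmemS]
    have h1' : r * (z.1 : R) = s * p := congrArg Subtype.val (congrArg Prod.fst hz)
    have h2' : r * (z.2 : R) = s * q := congrArg Subtype.val (congrArg Prod.snd hz)
    have key : r * (q * (z.1 : R) - p * (z.2 : R)) = 0 := by
      have expand : r * (q * (z.1 : R) - p * (z.2 : R))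
          = q * (r * (z.1 : R)) - p * (r * (z.2 : R)) := by ring
      rw [expand, h1', h2']; ring
    exact sub_eq_zero.1 ((mul_eq_zero.1 key).resolve_left hr)
  -- S is isomorphic to an ideal via the second coordinate
  set ψ := sndCoord K L S with hψ
  have hψ0 : ∀ z : ↥S, ψ z = 0 → z = 0 := by
    intro z hz
    have h2 : (((z : ↥K × ↥L)).2 : R) = 0 := hz
    have hq := (hmemS (z : ↥K × ↥L)).1 z.2
    rw [h2, mul_zero] at hq
    have h1 : (((z : ↥K × ↥L)).1 : R) = 0 := by
      rcases mul_eq_zero.1 hq with h | h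
      · exact absurd h hqa
      · exact h
    apply Subtype.ext
    apply Prod.ext
    · exact Subtype.ext h1
    · exact Subtype.ext h2
  have hψinj : Function.Injective ψ := by
    intro z w hzw
    have := hψ0 (z - w) (by rw [map_sub, hzw, sub_self])
    exact sub_eq_zero.1 this
  refine ⟨S, ?_⟩
  by_cases hp0 : p = 0
  · -- degenerate case: S = ⊥ × ⊤, complement ⊤ × ⊥
    set T := (⊤ : Submodule R ↥K).prod (⊥ : Submodule R ↥L) with hT
    have hTmem : ∀ z : ↥K × ↥L, z ∈ T ↔ z.2 = 0 := by
      intro z; rw [hT]; simp [Submodule.mem_prod]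
    refine ⟨T, LinearMap.range ψ, LinearMap.range (fstCoord K L T), ⟨?_, ?_⟩, hpaqaS, hsatS,
      ⟨LinearEquiv.ofInjective ψ hψinj⟩, ⟨LinearEquiv.ofInjective _ ?_⟩⟩
    · -- disjoint
      rw [Submodule.disjoint_def]
      intro z hzS hzT
      have h2 : z.2 = 0 := (hTmem z).1 hzT
      have h1 := (hmemS z).1 hzS
      rw [hp0, zero_mul] at h1
      have : (z.1 : R) = 0 := by
        rcases mul_eq_zero.1 h1 with h | h
        · exact absurd h hqa
        · exact h
      apply Prod.ext
      · exact Subtype.ext this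
      · exact h2
    · -- codisjoint
      rw [codisjoint_iff, eq_top_iff]
      intro z _
      refine Submodule.mem_sup.2 ⟨(0, z.2), ?_, (z.1, 0), ?_, ?_⟩
      · rw [hmemS]; simp [hp0]
      · rw [hTmem]
      · apply Prod.ext <;> simp
    · -- fstCoord injective on T
      intro z w hzw
      have hz2 : (z : ↥K × ↥L).2 = 0 := (hTmem _).1 z.2
      have hw2 : (w : ↥K × ↥L).2 = 0 := (hTmem _).1 w.2
      apply Subtype.ext
      apply Prod.ext
      · exact Subtype.ext hzw
      · rw [hz2, hw2]
  · -- main case: use the crux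
    set Ip := Ideal.span {p} * L with hIpdef
    set Jq := Ideal.span {q} * K with hJqdef
    have hIpbot : Ip ≠ ⊥ := Submodule.ne_bot_iff _ |>.2
      ⟨p * q, Ideal.mem_span_singleton_mul.2 ⟨q, qa.2, rfl⟩, mul_ne_zero hp0 hqa⟩
    have hJqbot : Jq ≠ ⊥ := Submodule.ne_bot_iff _ |>.2
      ⟨q * p, Ideal.mem_span_singleton_mul.2 ⟨p, pa.2, rfl⟩, mul_ne_zero hqa hp0⟩
    obtain ⟨s, t, hst, hsIp, htJq⟩ := crux hH hP Ip Jq hIpbot hJqbot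
    -- the multiplication maps
    set μK : ↥K →ₗ[R] R := q • (Submodule.subtype K) with hμK
    set μL : ↥L →ₗ[R] R := p • (Submodule.subtype L) with hμL
    have hμKapp : ∀ x : ↥K, μK x = q * (x : R) := fun x => rfl
    have hμLapp : ∀ x : ↥L, μL x = p * (x : R) := fun x => rfl
    have hμKinj : Function.Injective μK := by
      intro x y h
      rw [hμKapp, hμKapp] at h
      exact Subtype.ext (mul_left_cancel₀ hqa h)
    have hμLinj : Function.Injective μL := by
      intro x y h
      rw [hμLapp, hμLapp] at h
      exact Subtype.ext (mul_left_cancel₀ hp0 h)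
    have hμKrange : LinearMap.range μK = Jq := by
      ext x
      simp only [LinearMap.mem_range]
      constructor
      · rintro ⟨k, rfl⟩
        exact Ideal.mem_span_singleton_mul.2 ⟨k, k.2, rfl⟩
      · intro hx
        obtain ⟨z, hz, hzx⟩ := Ideal.mem_span_singleton_mul.1 hx
        exact ⟨⟨z, hz⟩, hzx⟩
    have hμLrange : LinearMap.range μL = Ip := by
      ext x
      simp only [LinearMap.mem_range]
      constructor
      · rintro ⟨k, rfl⟩
        exact Ideal.mem_span_singleton_mul.2 ⟨k, k.2, rfl⟩
      · intro hx
        obtain ⟨z, hz, hzx⟩ := Ideal.mem_span_singleton_mul.1 hx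
        exact ⟨⟨z, hz⟩, hzx⟩
    have htmem : ∀ γ : ↥(Ip ⊔ Jq), (t • (Ip ⊔ Jq).subtype) γ ∈ LinearMap.range μK := by
      intro γ
      rw [hμKrange]
      exact htJq _ γ.2
    have hsmem : ∀ γ : ↥(Ip ⊔ Jq), (s • (Ip ⊔ Jq).subtype) γ ∈ LinearMap.range μL := by
      intro γ
      rw [hμLrange]
      exact hsIp _ γ.2
    set eK := LinearEquiv.ofInjective μK hμKinj with heK
    set eL := LinearEquiv.ofInjective μL hμLinj with heL
    set u : ↥(Ip ⊔ Jq) →ₗ[R] ↥K :=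
      eK.symm.toLinearMap ∘ₗ LinearMap.codRestrict _ (t • (Ip ⊔ Jq).subtype) htmem with hu
    set v : ↥(Ip ⊔ Jq) →ₗ[R] ↥L :=
      eL.symm.toLinearMap ∘ₗ LinearMap.codRestrict _ (s • (Ip ⊔ Jq).subtype) hsmem with hv
    have huapp : ∀ γ : ↥(Ip ⊔ Jq), q * ((u γ : ↥K) : R) = t * (γ : R) := by
      intro γ
      have h1 : μK (u γ) = t * (γ : R) := by
        rw [hu]
        simp only [LinearMap.coe_comp, Function.comp_apply, LinearEquiv.coe_coe]
        rw [← LinearEquiv.ofInjective_apply μK (h := hμKinj), ← heK]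
        rw [eK.apply_symm_apply]
        rfl
      rw [← h1]; rfl
    have hvapp : ∀ γ : ↥(Ip ⊔ Jq), p * ((v γ : ↥L) : R) = s * (γ : R) := by
      intro γ
      have h1 : μL (v γ) = s * (γ : R) := by
        rw [hv]
        simp only [LinearMap.coe_comp, Function.comp_apply, LinearEquiv.coe_coe]
        rw [← LinearEquiv.ofInjective_apply μL (h := hμLinj), ← heL]
        rw [eL.apply_symm_apply]
        rfl
      rw [← h1]; rfl
    set φ : ↥(Ip ⊔ Jq) →ₗ[R] ↥K × ↥L := LinearMap.prod u (-v) with hφ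
    have hφapp : ∀ γ, φ γ = (u γ, -(v γ)) := fun γ => rfl
    have hφ0 : ∀ γ, φ γ = 0 → γ = 0 := by
      intro γ hγ
      have h1 : u γ = 0 := congrArg Prod.fst hγ
      have h2 : v γ = 0 := by
        have := congrArg Prod.snd hγ
        simp only [hφapp] at this ⊢
        exact neg_eq_zero.1 this
      have ht0 : t * (γ : R) = 0 := by rw [← huapp, h1]; simp
      have hs0 : s * (γ : R) = 0 := by rw [← hvapp, h2]; simp
      have : (γ : R) = 0 := by
        have : (s + t) * (γ : R) = 0 := by rw [add_mul, hs0, ht0, add_zero]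
        rwa [hst, one_mul] at this
      exact Subtype.ext this
    have hφinj : Function.Injective φ := by
      intro z w hzw
      have := hφ0 (z - w) (by rw [map_sub, hzw, sub_self])
      exact sub_eq_zero.1 this
    set T := LinearMap.range φ with hT
    refine ⟨T, LinearMap.range ψ, Ip ⊔ Jq, ⟨?_, ?_⟩, hpaqaS, hsatS,
      ⟨LinearEquiv.ofInjective ψ hψinj⟩, ⟨(LinearEquiv.ofInjective φ hφinj).symm⟩⟩
    · -- disjoint
      rw [Submodule.disjoint_def]
      intro z hzS hzT
      obtain ⟨γ, rfl⟩ := hzT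
      have hmem := (hmemS _).1 hzS
      rw [hφapp] at hmem
      simp only at hmem
      -- hmem : q * ↑(u γ) = p * ↑(-(v γ))
      have hneg : ((-(v γ) : ↥L) : R) = -((v γ : ↥L) : R) := rfl
      rw [hneg, huapp, mul_neg, hvapp] at hmem
      have : (γ : R) = 0 := by
        have h3 : (s + t) * (γ : R) = 0 := by
          have : t * (γ : R) + s * (γ : R) = 0 := by rw [hmem]; ring
          linear_combination this
        rwa [hst, one_mul] at h3
      rw [hφapp, show γ = 0 from Subtype.ext this]
      simp
    · -- codisjoint
      rw [codisjoint_iff, eq_top_iff]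
      intro z0 _
      have hγmem : q * ((z0.1 : ↥K) : R) - p * ((z0.2 : ↥L) : R) ∈ Ip ⊔ Jq := by
        apply sub_mem
        · exact Submodule.mem_sup_right (Ideal.mem_span_singleton_mul.2 ⟨z0.1, z0.1.2, rfl⟩)
        · exact Submodule.mem_sup_left (Ideal.mem_span_singleton_mul.2 ⟨z0.2, z0.2.2, rfl⟩)
      set γ : ↥(Ip ⊔ Jq) := ⟨_, hγmem⟩ with hγ
      refine Submodule.mem_sup.2 ⟨z0 - φ γ, ?_, φ γ, ⟨γ, rfl⟩, sub_add_cancel _ _⟩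
      rw [hmemS]
      have e1 : ((z0 - φ γ).1 : R) = (z0.1 : R) - ((u γ : ↥K) : R) := by rw [hφapp]; rfl
      have e2 : ((z0 - φ γ).2 : R) = (z0.2 : R) + ((v γ : ↥L) : R) := by
        rw [hφapp]
        show ((z0.2 - -(v γ) : ↥L) : R) = _
        push_cast
        ring
      rw [e1, e2, mul_sub, mul_add, huapp, hvapp]
      have hγcoe : (γ : R) = q * ((z0.1 : ↥K) : R) - p * ((z0.2 : ↥L) : R) := rfl
      rw [hγcoe]
      linear_combination (-(q * ((z0.1 : ↥K) : R) - p * ((z0.2 : ↥L) : R))) * hst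

end Merge
section Plumb

variable {R}

instance ideal_nzsd (J : Ideal R) : NoZeroSMulDivisors R ↥J :=
  Function.Injective.noZeroSMulDivisors _ Subtype.val_injective rfl (fun _ _ => rfl)

/-- finite product of ideals, as a module -/
abbrev Bp {k : ℕ} (I : Fin k → Ideal R) : Type u := ∀ i, ↥(I i)

variable (R) in
/-- `M` is isomorphic to a product of `k` ideals -/
def SumId (k : ℕ) (M : Type u) [AddCommGroup M] [Module R M] : Prop :=
  ∃ I : Fin k → Ideal R, Nonempty (M ≃ₗ[R] Bp I)

variable {M N P : Type u} [AddCommGroup M] [Module R M] [AddCommGroup N] [Module R N]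
  [AddCommGroup P] [Module R P]

def ssEquiv [Subsingleton M] [Subsingleton N] : M ≃ₗ[R] N where
  toFun := fun _ => 0
  invFun := fun _ => 0
  map_add' := by intros; simp
  map_smul' := by intros; simp
  left_inv := fun x => Subsingleton.elim _ _
  right_inv := fun x => Subsingleton.elim _ _

def prodSEquiv [Subsingleton N] : (M × N) ≃ₗ[R] M where
  toFun := Prod.fst
  invFun := fun m => (m, 0)
  map_add' := by intros; rfl
  map_smul' := by intros; rfl
  left_inv := fun z => Prod.ext rfl (Subsingleton.elim _ _)
  right_inv := fun m => rfl

def sProdEquiv [Subsingleton M] : (M × N) ≃ₗ[R] N where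
  toFun := Prod.snd
  invFun := fun n => (0, n)
  map_add' := by intros; rfl
  map_smul' := by intros; rfl
  left_inv := fun z => Prod.ext (Subsingleton.elim _ _) rfl
  right_inv := fun m => rfl

def pAssoc : ((M × N) × P) ≃ₗ[R] (M × (N × P)) where
  toFun := fun z => (z.1.1, (z.1.2, z.2))
  invFun := fun z => ((z.1, z.2.1), z.2.2)
  map_add' := by intros; rfl
  map_smul' := by intros; rfl
  left_inv := fun z => rfl
  right_inv := fun z => rfl

def prodSubEquiv (p : Submodule R M) (q : Submodule R N) :
    ↥(p.prod q) ≃ₗ[R] (↥p × ↥q) where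
  toFun := fun z => (⟨(z : M × N).1, z.2.1⟩, ⟨(z : M × N).2, z.2.2⟩)
  invFun := fun z => ⟨((z.1 : M), (z.2 : N)), ⟨z.1.2, z.2.2⟩⟩
  map_add' := by intros; rfl
  map_smul' := by intros; rfl
  left_inv := fun z => rfl
  right_inv := fun z => rfl

/-- the sum of two disjoint submodules is isomorphic to their product -/
noncomputable def supEquiv (p q : Submodule R M) (h : p ⊓ q = ⊥) :
    (↥p × ↥q) ≃ₗ[R] ↥(p ⊔ q) := by
  refine LinearEquiv.ofBijective
    { toFun := fun z => ⟨(z.1 : M) + (z.2 : M),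
        Submodule.add_mem _ (Submodule.mem_sup_left z.1.2) (Submodule.mem_sup_right z.2.2)⟩
      map_add' := by
        intros z w
        apply Subtype.ext
        simp only [Prod.fst_add, Prod.snd_add, Submodule.coe_add]
        abel
      map_smul' := by
        intros c z
        apply Subtype.ext
        simp only [Prod.smul_fst, Prod.smul_snd, SetLike.val_smul, RingHom.id_apply]
        rw [smul_add] } ⟨?_, ?_⟩
  · intro z w hzw
    have h1 : (z.1 : M) + (z.2 : M) = (w.1 : M) + (w.2 : M) := congrArg Subtype.val hzw
    have h2 : (z.1 : M) - (w.1 : M) = (w.2 : M) - (z.2 : M) := by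
      rw [sub_eq_sub_iff_add_eq_add, h1, add_comm]
    have hmem : ((z.1 : M) - (w.1 : M)) ∈ p ⊓ q := by
      constructor
      · exact sub_mem z.1.2 w.1.2
      · rw [h2]; exact sub_mem w.2.2 z.2.2
    rw [h] at hmem
    have h3 : (z.1 : M) = (w.1 : M) := sub_eq_zero.1 ((Submodule.mem_bot R).1 hmem)
    have h4 : (z.2 : M) = (w.2 : M) := by
      rw [h3] at h1
      exact add_left_cancel h1
    exact Prod.ext (Subtype.ext h3) (Subtype.ext h4)
  · rintro ⟨x, hx⟩
    obtain ⟨y, hy, z, hz, hyz⟩ := Submodule.mem_sup.1 hx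
    exact ⟨(⟨y, hy⟩, ⟨z, hz⟩), Subtype.ext hyz⟩

lemma isCompl_prod {p p' : Submodule R M} {q q' : Submodule R N}
    (h1 : IsCompl p p') (h2 : IsCompl q q') : IsCompl (p.prod q) (p'.prod q') := by
  constructor
  · rw [Submodule.disjoint_def]
    intro z hz hz'
    have e1 : z.1 ∈ p ⊓ p' := ⟨hz.1, hz'.1⟩
    have e2 : z.2 ∈ q ⊓ q' := ⟨hz.2, hz'.2⟩
    rw [h1.inf_eq_bot] at e1
    rw [h2.inf_eq_bot] at e2
    exact Prod.ext e1 e2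
  · rw [codisjoint_iff, Submodule.prod_sup_prod, h1.sup_eq_top, h2.sup_eq_top]
    ext z
    simp [Submodule.mem_prod]

lemma isCompl_map (e : M ≃ₗ[R] N) {p q : Submodule R M} (h : IsCompl p q) :
    IsCompl (p.map (e : M →ₗ[R] N)) (q.map (e : M →ₗ[R] N)) := by
  constructor
  · rw [Submodule.disjoint_def]
    rintro z ⟨a, ha, rfl⟩ ⟨b, hb, hba⟩
    have hab : b = a := e.injective hba
    subst hab
    have : b ∈ p ⊓ q := ⟨ha, hb⟩
    rw [h.inf_eq_bot] at this
    rw [(Submodule.mem_bot R).1 this]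
    simp
  · rw [codisjoint_iff, ← Submodule.map_sup, h.sup_eq_top, Submodule.map_top]
    simp

lemma sumId_congr {n : ℕ} (e : M ≃ₗ[R] N) (h : SumId R n N) : SumId R n M := by
  obtain ⟨I, ⟨eI⟩⟩ := h
  exact ⟨I, ⟨e.trans eI⟩⟩

lemma nzsd_equiv (e : M ≃ₗ[R] N) [NoZeroSMulDivisors R M] : NoZeroSMulDivisors R N :=
  Function.Injective.noZeroSMulDivisors (e.symm : N → M) e.symm.injective (map_zero _)
    (fun c x => map_smul e.symm c x)

/-- peeling off the last coordinate of a product of ideals -/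
def dEquiv {k : ℕ} (I : Fin (k + 1) → Ideal R) :
    (Bp I) ≃ₗ[R] ((Bp (fun i : Fin k => I i.castSucc)) × ↥(I (Fin.last k))) where
  toFun := fun f => (fun i => f i.castSucc, f (Fin.last k))
  invFun := fun g => Fin.lastCases g.2 g.1
  map_add' := by intros; rfl
  map_smul' := by intros; rfl
  left_inv := by
    intro f
    funext i
    refine Fin.lastCases ?_ ?_ i
    · simp
    · intro j
      simp
  right_inv := by
    intro g
    refine Prod.ext ?_ ?_
    · funext i
      simp
    · simp

def bpCongr {k : ℕ} {I J : Fin k → Ideal R} (h : ∀ i, I i = J i) :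
    (Bp I) ≃ₗ[R] (Bp J) :=
  LinearEquiv.piCongrRight (fun i => LinearEquiv.ofEq _ _ (h i))

/-- appending an ideal to a product of ideals -/
noncomputable def snocEquiv {k : ℕ} (J : Fin k → Ideal R) (J0 : Ideal R) :
    ((Bp J) × ↥J0) ≃ₗ[R] (Bp (Fin.snoc J J0)) :=
  have h1 : ∀ i : Fin k, J i = (Fin.snoc J J0 : Fin (k+1) → Ideal R) i.castSucc :=
    fun i => by simp
  have h2 : J0 = (Fin.snoc J J0 : Fin (k+1) → Ideal R) (Fin.last k) := by simp
  LinearEquiv.trans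
    (LinearEquiv.prodCongr (bpCongr h1) (LinearEquiv.ofEq _ _ h2))
    (dEquiv (Fin.snoc J J0)).symm

lemma subsingleton_bp0 (I : Fin 0 → Ideal R) : Subsingleton (Bp I) :=
  ⟨fun f g => funext fun i => i.elim0⟩

lemma sumId_zero_of_subsingleton [Subsingleton M] : SumId R 0 M := by
  refine ⟨fun i => i.elim0, ⟨?_⟩⟩
  have := subsingleton_bp0 (R := R) (fun i => i.elim0)
  exact ssEquiv

-- sat facts in products
lemma sat_fst {a : M × N} {z : M × N} (hz : z ∈ (sat a : Submodule R (M × N))) :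
    z.1 ∈ (sat a.1 : Submodule R M) := by
  obtain ⟨r, s, hr, h⟩ := hz
  exact ⟨r, s, hr, congrArg Prod.fst h⟩

lemma sat_snd {a : M × N} {z : M × N} (hz : z ∈ (sat a : Submodule R (M × N))) :
    z.2 ∈ (sat a.2 : Submodule R N) := by
  obtain ⟨r, s, hr, h⟩ := hz
  exact ⟨r, s, hr, congrArg Prod.snd h⟩

lemma sat_prod_zero [NoZeroSMulDivisors R N] (a : M) :
    (sat ((a, 0) : M × N) : Submodule R (M × N)) = (sat a).prod ⊥ := by
  ext z
  constructor
  · intro hz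
    refine ⟨sat_fst hz, ?_⟩
    obtain ⟨r, s, hr, h⟩ := hz
    have h2 : r • z.2 = s • (0 : N) := congrArg Prod.snd h
    rw [smul_zero] at h2
    exact (smul_eq_zero.1 h2).resolve_left hr
  · rintro ⟨h1, h2⟩
    obtain ⟨r, s, hr, h⟩ := h1
    have hz2 : z.2 = 0 := h2
    refine ⟨r, s, hr, Prod.ext h ?_⟩
    show r • z.2 = s • (0 : N)
    rw [hz2]
    simp

end Plumb
section Sharp

variable {R}

variable {M N : Type u} [AddCommGroup M] [Module R M] [AddCommGroup N] [Module R N]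

lemma sharp_pull (e : M ≃ₗ[R] N) (a : M) {n : ℕ}
    (h : ∃ (B₁ : Submodule R N) (J₀ : Ideal R), IsCompl (sat (e a)) B₁ ∧
      Nonempty (↥(sat (e a) : Submodule R N) ≃ₗ[R] ↥J₀) ∧ SumId R n ↥B₁) :
    ∃ (B₁ : Submodule R M) (J₀ : Ideal R), IsCompl (sat a) B₁ ∧
      Nonempty (↥(sat a : Submodule R M) ≃ₗ[R] ↥J₀) ∧ SumId R n ↥B₁ := by
  obtain ⟨B₁, J₀, hc, ⟨eq⟩, hs⟩ := h
  have hsat : (sat (e a) : Submodule R N).map (e.symm : N →ₗ[R] M) = sat a := by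
    rw [sat_map e.symm (e a), e.symm_apply_apply]
  refine ⟨B₁.map (e.symm : N →ₗ[R] M), J₀, ?_, ⟨?_⟩, ?_⟩
  · have := isCompl_map e.symm hc
    rwa [hsat] at this
  · refine ((LinearEquiv.ofEq _ _ hsat.symm) ≪≫ₗ ?_) ≪≫ₗ eq
    exact (Submodule.equivMapOfInjective (e.symm : N →ₗ[R] M) e.symm.injective _).symm
  · exact sumId_congr
      ((Submodule.equivMapOfInjective (e.symm : N →ₗ[R] M) e.symm.injective B₁).symm) hs

lemma sharp_merge_core (hH : IsHLocal R) (hP : IsPruefer R) {k' : ℕ}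
    (I'' : Fin k' → Ideal R) (K L : Ideal R)
    (IH : ∀ (M : Type u) [AddCommGroup M] [Module R M], SumId R (k' + 1) M → ∀ a : M, a ≠ 0 →
      ∃ (B₁ : Submodule R M) (J₀ : Ideal R), IsCompl (sat a) B₁ ∧
        Nonempty (↥(sat a : Submodule R M) ≃ₗ[R] ↥J₀) ∧ SumId R k' ↥B₁)
    (g : Bp I'' × (↥K × ↥L)) (hg2 : ((g.2.2 : ↥L) : R) ≠ 0) :
    ∃ (B₁ : Submodule R (Bp I'' × (↥K × ↥L))) (J₀ : Ideal R), IsCompl (sat g) B₁ ∧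
      Nonempty (↥(sat g : Submodule R (Bp I'' × (↥K × ↥L))) ≃ₗ[R] ↥J₀) ∧
      SumId R (k' + 1) ↥B₁ := by
  classical
  obtain ⟨S, T, JS, JT, hST, hgS, hsatS, ⟨eS⟩, ⟨eT⟩⟩ := merge hH hP K L g.2.1 g.2.2 hg2
  haveI : Subsingleton ↥(⊥ : Submodule R (Bp I'')) :=
    ⟨fun a b => Subtype.ext (by
      rw [(Submodule.mem_bot R).1 a.2, (Submodule.mem_bot R).1 b.2])⟩
  set Msub := (⊤ : Submodule R (Bp I'')).prod S with hMsub
  set Tsub := (⊥ : Submodule R (Bp I'')).prod T with hTsub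
  have hMT : IsCompl Msub Tsub := isCompl_prod isCompl_top_bot hST
  have hgM : g ∈ Msub := ⟨trivial, hgS⟩
  have hWM : ∀ z, z ∈ (sat g : Submodule R (Bp I'' × (↥K × ↥L))) → z ∈ Msub := by
    intro z hz
    exact ⟨trivial, hsatS (sat_snd hz)⟩
  set ι := Msub.subtype with hι
  have hιinj : Function.Injective ι := Subtype.val_injective
  set g₁ : ↥Msub := ⟨g, hgM⟩ with hg₁def
  have hg₁ : g₁ ≠ 0 := by
    intro h
    apply hg2
    have hg0 : g = 0 := congrArg Subtype.val h
    rw [hg0]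
    rfl
  have hsum₁ : SumId R (k' + 1) ↥Msub := by
    refine ⟨Fin.snoc I'' JS, ⟨?_⟩⟩
    exact (prodSubEquiv _ _) ≪≫ₗ (LinearEquiv.prodCongr Submodule.topEquiv eS) ≪≫ₗ snocEquiv I'' JS
  obtain ⟨B₁ᵢ, J₀, hcomplᵢ, ⟨eqWᵢ⟩, hsumᵢ⟩ := IH ↥Msub hsum₁ g₁ hg₁
  have hsatmap : (sat g₁ : Submodule R ↥Msub).map ι = sat g := by
    apply le_antisymm
    · rintro z ⟨w, hw, rfl⟩
      exact (mem_sat_map ι hιinj g₁ w).2 hw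
    · intro z hz
      refine ⟨⟨z, hWM z hz⟩, ?_, rfl⟩
      exact (mem_sat_map ι hιinj g₁ ⟨z, hWM z hz⟩).1 hz
  have hmaple : B₁ᵢ.map ι ≤ Msub := Submodule.map_subtype_le Msub B₁ᵢ
  refine ⟨(B₁ᵢ.map ι) ⊔ Tsub, J₀, ⟨?_, ?_⟩, ⟨?_⟩, ?_⟩
  · -- disjoint
    rw [Submodule.disjoint_def]
    intro z hzW hzB
    obtain ⟨y, hy, t, ht, hyt⟩ := Submodule.mem_sup.1 hzB
    have hzM : z ∈ Msub := hWM z hzW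
    have hyM : y ∈ Msub := hmaple hy
    have htM : t ∈ Msub := by
      have het : t = z - y := by rw [← hyt]; abel
      rw [het]; exact Submodule.sub_mem _ hzM hyM
    have ht0 : t = 0 := by
      have hmm : t ∈ Msub ⊓ Tsub := ⟨htM, ht⟩
      rwa [hMT.inf_eq_bot, Submodule.mem_bot] at hmm
    rw [ht0, add_zero] at hyt
    subst hyt
    obtain ⟨w, hw, rfl⟩ := hy
    have hwsat : w ∈ (sat g₁ : Submodule R ↥Msub) := (mem_sat_map ι hιinj g₁ w).1 hzW
    have hw0 : w ∈ (sat g₁ : Submodule R ↥Msub) ⊓ B₁ᵢ := ⟨hwsat, hw⟩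
    rw [hcomplᵢ.inf_eq_bot, Submodule.mem_bot] at hw0
    rw [hw0]
    simp
  · -- codisjoint
    rw [codisjoint_iff, ← sup_assoc, ← hsatmap, ← Submodule.map_sup, hcomplᵢ.sup_eq_top,
      Submodule.map_top, Submodule.range_subtype]
    exact hMT.sup_eq_top
  · -- equiv of sat g with the ideal J₀
    exact (LinearEquiv.ofEq _ _ hsatmap.symm) ≪≫ₗ
      (Submodule.equivMapOfInjective ι hιinj _).symm ≪≫ₗ eqWᵢ
  · -- the complement is a sum of k' + 1 ideals
    obtain ⟨J', ⟨e'⟩⟩ := hsumᵢ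
    have hd : (B₁ᵢ.map ι) ⊓ Tsub = ⊥ := by
      rw [← le_bot_iff, ← hMT.inf_eq_bot]
      exact inf_le_inf_right _ hmaple
    refine ⟨Fin.snoc J' JT, ⟨?_⟩⟩
    refine (supEquiv _ _ hd).symm ≪≫ₗ ?_ ≪≫ₗ snocEquiv J' JT
    refine LinearEquiv.prodCongr ?_ ?_
    · exact (Submodule.equivMapOfInjective ι hιinj B₁ᵢ).symm ≪≫ₗ e'
    · exact (prodSubEquiv _ _) ≪≫ₗ sProdEquiv ≪≫ₗ eT

theorem sharp (hH : IsHLocal R) (hP : IsPruefer R) :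
    ∀ (k : ℕ) (M : Type u) [AddCommGroup M] [Module R M],
    SumId R k M → ∀ a : M, a ≠ 0 →
    ∃ (B₁ : Submodule R M) (J₀ : Ideal R), IsCompl (sat a) B₁ ∧
      Nonempty (↥(sat a : Submodule R M) ≃ₗ[R] ↥J₀) ∧ SumId R (k - 1) ↥B₁ := by
  intro k
  induction k with
  | zero =>
    intro M _ _ hM a ha
    obtain ⟨I, ⟨e⟩⟩ := hM
    haveI : Subsingleton (Bp I) := subsingleton_bp0 I
    haveI : Subsingleton M := e.toEquiv.subsingleton
    exact absurd (Subsingleton.elim a 0) ha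
  | succ k IH =>
    intro M _ _ hM a ha
    obtain ⟨I, ⟨e⟩⟩ := hM
    refine sharp_pull (e ≪≫ₗ dEquiv I) a ?_
    rcases k with _ | k'
    · -- k = 0 : one single ideal
      set L := I (Fin.last 0) with hLdef
      set c := (e ≪≫ₗ dEquiv I) a with hcdef
      have hc0 : c ≠ 0 := by
        intro h
        exact ha ((LinearEquiv.map_eq_zero_iff _).1 h)
      haveI : Subsingleton (Bp (fun i : Fin 0 => I i.castSucc)) := subsingleton_bp0 _
      by_cases h2 : c.2 = 0
      · exact absurd (Prod.ext (Subsingleton.elim _ _) h2) hc0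
      · -- base case : sat c = ⊤
        have hc2R : ((c.2 : ↥L) : R) ≠ 0 := fun h => h2 (ZeroMemClass.coe_eq_zero.1 h)
        have hsat_top : (sat c : Submodule R (Bp (fun i : Fin 0 => I i.castSucc) × ↥L)) = ⊤ := by
          rw [eq_top_iff]
          intro z _
          refine ⟨((c.2 : ↥L) : R), ((z.2 : ↥L) : R), hc2R, Prod.ext (Subsingleton.elim _ _) ?_⟩
          show ((c.2 : ↥L) : R) • z.2 = ((z.2 : ↥L) : R) • c.2
          apply Subtype.ext
          show ((c.2 : ↥L) : R) * ((z.2 : ↥L) : R) = ((z.2 : ↥L) : R) * ((c.2 : ↥L) : R)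
          ring
        refine ⟨⊥, L, ?_, ⟨?_⟩, ?_⟩
        · rw [hsat_top]; exact isCompl_top_bot
        · exact (LinearEquiv.ofEq _ _ hsat_top) ≪≫ₗ (Submodule.topEquiv ≪≫ₗ sProdEquiv)
        · exact sumId_zero_of_subsingleton
    · -- k = k' + 1 : at least two ideals
      set L := I (Fin.last (k' + 1)) with hLdef
      set c := (e ≪≫ₗ dEquiv I) a with hcdef
      have hc0 : c ≠ 0 := by
        intro h
        exact ha ((LinearEquiv.map_eq_zero_iff _).1 h)
      by_cases h2 : c.2 = 0
      · have hceq : c = (c.1, (0 : ↥L)) := Prod.ext rfl h2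
        have ha' : c.1 ≠ 0 := by
          intro h0
          exact hc0 (Prod.ext h0 h2)
        obtain ⟨B₁', J₀, hcompl', ⟨eqW'⟩, hsum'⟩ :=
          IH (Bp (fun i : Fin (k' + 1) => I i.castSucc)) ⟨_, ⟨LinearEquiv.refl R _⟩⟩ c.1 ha'
        have hsatc : (sat c : Submodule R (Bp (fun i : Fin (k' + 1) => I i.castSucc) × ↥L))
            = (sat c.1).prod ⊥ := by
          conv_lhs => rw [hceq]
          exact sat_prod_zero _
        refine ⟨B₁'.prod ⊤, J₀, ?_, ⟨?_⟩, ?_⟩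
        · rw [hsatc]
          exact isCompl_prod hcompl' isCompl_bot_top
        · refine (LinearEquiv.ofEq _ _ hsatc) ≪≫ₗ ?_
          exact ((prodSubEquiv _ _) ≪≫ₗ prodSEquiv) ≪≫ₗ eqW'
        · obtain ⟨J', ⟨e'⟩⟩ := hsum'
          refine ⟨Fin.snoc J' L, ⟨?_⟩⟩
          refine ?_ ≪≫ₗ (snocEquiv J' L)
          exact (prodSubEquiv _ _) ≪≫ₗ (LinearEquiv.prodCongr e' Submodule.topEquiv)
      · -- merge case
        have hc2R : ((c.2 : ↥L) : R) ≠ 0 := fun h => h2 (ZeroMemClass.coe_eq_zero.1 h)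
        refine sharp_pull ((LinearEquiv.prodCongr (dEquiv (fun i : Fin (k' + 1) => I i.castSucc))
          (LinearEquiv.refl R ↥L)) ≪≫ₗ pAssoc) c ?_
        exact sharp_merge_core hH hP _ _ _ IH _ hc2R

end Sharp
section MainThm

variable {R}

theorem mainthm (hH : IsHLocal R) (hP : IsPruefer R) :
    ∀ (k : ℕ) (M : Type u) [AddCommGroup M] [Module R M],
    SumId R k M → ∀ A : Submodule R M, SatSub A →
    (∃ C, IsCompl A C) ∧ ∃ (n : ℕ), SumId R n ↥A := by
  intro k
  induction k with
  | zero =>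
    intro M _ _ hM A hA
    obtain ⟨I, ⟨e⟩⟩ := hM
    haveI : Subsingleton (Bp I) := subsingleton_bp0 I
    haveI : Subsingleton M := e.toEquiv.subsingleton
    haveI : Subsingleton ↥A := ⟨fun a b => Subtype.ext (Subsingleton.elim _ _)⟩
    have hAtop : A = ⊤ := by
      rw [eq_top_iff]
      intro x _
      rw [Subsingleton.elim x 0]
      exact A.zero_mem
    constructor
    · exact ⟨⊥, by rw [hAtop]; exact isCompl_top_bot⟩
    · exact ⟨0, sumId_zero_of_subsingleton⟩
  | succ k IH =>
    intro M _ _ hM A hA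
    haveI hnz : NoZeroSMulDivisors R M := by
      obtain ⟨I, ⟨e⟩⟩ := hM
      exact nzsd_equiv e.symm
    by_cases hAbot : A = ⊥
    · constructor
      · exact ⟨⊤, by rw [hAbot]; exact isCompl_bot_top⟩
      · refine ⟨0, ?_⟩
        haveI : Subsingleton ↥A := by
          rw [hAbot]
          exact ⟨fun a b => Subtype.ext (by
            rw [(Submodule.mem_bot R).1 a.2, (Submodule.mem_bot R).1 b.2])⟩
        exact sumId_zero_of_subsingleton
    · obtain ⟨a, haA, ha0⟩ := Submodule.exists_mem_ne_zero_of_ne_bot hAbot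
      obtain ⟨B₁, J₀, hcompl, ⟨eW⟩, hsum⟩ := sharp hH hP (k + 1) M hM a ha0
      have hWA : (sat a : Submodule R M) ≤ A := sat_le_of_mem hA haA
      set A₁ := A.comap B₁.subtype with hA₁
      have hA₁sat : SatSub A₁ := by
        intro r b hr hb
        have hb' : r • (B₁.subtype b) ∈ A := by
          rw [← map_smul]
          exact hb
        exact hA r _ hr hb'
      obtain ⟨⟨C₁, hC₁⟩, ⟨n, hn⟩⟩ := IH ↥B₁ hsum A₁ hA₁sat
      set C := C₁.map B₁.subtype with hC
      have hmapA₁ : A₁.map B₁.subtype = A ⊓ B₁ := by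
        rw [hA₁, Submodule.map_comap_subtype, inf_comm]
      constructor
      · refine ⟨C, ⟨?_, ?_⟩⟩
        · rw [Submodule.disjoint_def]
          intro z hzA hzC
          obtain ⟨w, hw, rfl⟩ := hzC
          have hwA₁ : w ∈ A₁ := hzA
          have hw0 : w ∈ A₁ ⊓ C₁ := ⟨hwA₁, hw⟩
          rw [hC₁.inf_eq_bot, Submodule.mem_bot] at hw0
          rw [hw0]
          simp
        · rw [codisjoint_iff, eq_top_iff]
          have h1 : (A ⊓ B₁) ⊔ C = B₁ := by
            rw [hC, ← hmapA₁, ← Submodule.map_sup, hC₁.sup_eq_top,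
              Submodule.map_top, Submodule.range_subtype]
          calc (⊤ : Submodule R M) = (sat a) ⊔ B₁ := hcompl.sup_eq_top.symm
            _ ≤ A ⊔ B₁ := sup_le_sup_right hWA _
            _ = A ⊔ ((A ⊓ B₁) ⊔ C) := by rw [h1]
            _ ≤ A ⊔ C := by
                apply sup_le le_sup_left
                apply sup_le _ le_sup_right
                exact le_trans inf_le_left le_sup_left
      · refine ⟨n + 1, ?_⟩
        have hdisj : (sat a : Submodule R M) ⊓ (A ⊓ B₁) = ⊥ := by
          rw [← le_bot_iff, ← hcompl.inf_eq_bot]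
          exact inf_le_inf_left _ inf_le_right
        have hAeq : (sat a : Submodule R M) ⊔ (A ⊓ B₁) = A := by
          apply le_antisymm
          · exact sup_le hWA inf_le_left
          · intro x hxA
            have hx' : x ∈ (sat a : Submodule R M) ⊔ B₁ := by
              rw [hcompl.sup_eq_top]
              trivial
            obtain ⟨y, hy, z, hz, hyz⟩ := Submodule.mem_sup.1 hx'
            refine Submodule.mem_sup.2 ⟨y, hy, z, ⟨?_, hz⟩, hyz⟩
            have hzeq : z = x - y := by rw [← hyz]; abel
            rw [hzeq]
            exact Submodule.sub_mem _ hxA (hWA hy)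
        obtain ⟨Jn, ⟨en⟩⟩ := hn
        refine ⟨Fin.snoc Jn J₀, ⟨?_⟩⟩
        refine (LinearEquiv.ofEq _ _ hAeq.symm) ≪≫ₗ (supEquiv _ _ hdisj).symm ≪≫ₗ ?_
          ≪≫ₗ snocEquiv Jn J₀
        refine (LinearEquiv.prodComm R _ _) ≪≫ₗ LinearEquiv.prodCongr ?_ eW
        exact (LinearEquiv.ofEq _ _ hmapA₁.symm) ≪≫ₗ
          (Submodule.equivMapOfInjective B₁.subtype Subtype.val_injective A₁).symm ≪≫ₗ en

end MainThm
section Final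

variable {R}

lemma satsub_of_pure {M : Type v} [AddCommGroup M] [Module R M] [NoZeroSMulDivisors R M]
    (A : Submodule R M) (hA : IsPureSub R A) : SatSub A := by
  intro r b hr hrb
  obtain ⟨y, hy, hsum⟩ := hA 1 1 (fun _ _ => r) (fun _ => r • b) (fun _ => hrb)
    ⟨fun _ => b, fun i => by rw [Fin.sum_univ_one]⟩
  have h0 := hsum 0
  rw [Fin.sum_univ_one] at h0
  have hyb : y 0 = b := smul_right_injective M hr h0
  rw [← hyb]
  exact hy 0

end Final

/-- Olberding: over an h-local Prüfer domain, a pure submodule of a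
finite direct sum of ideals is a direct summand and is isomorphic to a direct sum of
ideals. -/
theorem stmt16 (hH : IsHLocal R) (hP : IsPruefer R)
    (k : ℕ) (I : Fin k → Ideal R)
    (A : Submodule R (⨁ i, ↥(I i))) (hA : IsPureSub R A) :
    (∃ C : Submodule R (⨁ i, ↥(I i)), IsCompl A C) ∧ IsDirectSumOfIdeals R ↥A := by
  classical
  have e0 : (⨁ i, ↥(I i)) ≃ₗ[R] Bp I :=
    DirectSum.linearEquivFunOnFintype R (Fin k) (fun i => ↥(I i))
  haveI : NoZeroSMulDivisors R (⨁ i, ↥(I i)) := nzsd_equiv e0.symm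
  have hsat : SatSub A := satsub_of_pure A hA
  obtain ⟨⟨C, hC⟩, ⟨n, ⟨J, ⟨eA⟩⟩⟩⟩ := mainthm hH hP k (⨁ i, ↥(I i)) ⟨I, ⟨e0⟩⟩ A hsat
  refine ⟨⟨C, hC⟩, ?_⟩
  refine ⟨ULift (Fin n), fun u => J (Equiv.ulift u), ⟨?_⟩⟩
  refine eA ≪≫ₗ ?_ ≪≫ₗ (DirectSum.linearEquivFunOnFintype R (ULift (Fin n))
    (fun u => ↥(J (Equiv.ulift u)))).symm
  exact LinearEquiv.piCongrLeft R (fun u : ULift (Fin n) => ↥(J (Equiv.ulift u)))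
    Equiv.ulift.symm
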